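/- Tree Preservation: in the tree-recognition system, if G is an input graph and G ⇒*_𝓡 H, then G is a tree if and only if H is a tree. -/

import Mathlib

/-! # Rooted graph transformation with relabelling -/

/-- A graph over a label alphabet `(LV, LE)`: finite vertex and edge sets, total
source/target functions, a partial node-labelling function `l`, a total
edge-labelling function `m`, and a partial rootedness function `p`
(`some true` = root node, `some false` = non-root, `none` = undefined). -/
structure RGraph (LV LE : Type) : Type 1 where
  V : Type
  E : Type
  finV : Finite V
  finE : Finite E
  s : E → V
  t : E → V
  l : V → Option LV
  m : E → LE
  p : V → Option Bool

namespace RGraph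

variable {LV LE : Type}

def IsTotallyLabelled (G : RGraph LV LE) : Prop := ∀ v, (G.l v).isSome
def IsTotallyRooted (G : RGraph LV LE) : Prop := ∀ v, (G.p v).isSome
/-- totally labelled, totally rooted graph -/
def IsTLRG (G : RGraph LV LE) : Prop := G.IsTotallyLabelled ∧ G.IsTotallyRooted

/-- The number of root nodes `|p⁻¹({1})|`. -/
noncomputable def rootCount (G : RGraph LV LE) : ℕ := Nat.card {v : G.V // G.p v = some true}

/-- The degree of a node. -/
noncomputable def degree (G : RGraph LV LE) (v : G.V) : ℕ :=
  Nat.card {e : G.E // G.s e = v} + Nat.card {e : G.E // G.t e = v}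

end RGraph

/-- RGraph morphisms preserve sources, targets, edge labels, and node labels and
rootedness wherever these are defined. -/
structure Morphism {LV LE : Type} (G H : RGraph LV LE) : Type where
  fV : G.V → H.V
  fE : G.E → H.E
  src : ∀ e, fV (G.s e) = H.s (fE e)
  tgt : ∀ e, fV (G.t e) = H.t (fE e)
  edgeLabel : ∀ e, G.m e = H.m (fE e)
  nodeLabel : ∀ v x, G.l v = some x → H.l (fV v) = some x
  rootedness : ∀ v b, G.p v = some b → H.p (fV v) = some b

namespace Morphism

variable {LV LE : Type} {G H K : RGraph LV LE}

def Injective (g : Morphism G H) : Prop := Function.Injective g.fV ∧ Function.Injective g.fE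

/-- identity morphism -/
def ident (G : RGraph LV LE) : Morphism G G where
  fV := id
  fE := id
  src := fun _ => rfl
  tgt := fun _ => rfl
  edgeLabel := fun _ => rfl
  nodeLabel := fun _ _ h => h
  rootedness := fun _ _ h => h

/-- composition of morphisms -/
def comp (g : Morphism G H) (h : Morphism H K) : Morphism G K where
  fV := h.fV ∘ g.fV
  fE := h.fE ∘ g.fE
  src := fun e => by simp [Function.comp, g.src e, h.src (g.fE e)]
  tgt := fun e => by simp [Function.comp, g.tgt e, h.tgt (g.fE e)]
  edgeLabel := fun e => by simp [Function.comp, ← h.edgeLabel (g.fE e), g.edgeLabel e]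
  nodeLabel := fun v x hx => h.nodeLabel _ _ (g.nodeLabel v x hx)
  rootedness := fun v b hb => h.rootedness _ _ (g.rootedness v b hb)

end Morphism

/-- An isomorphism of graphs: a morphism with a two-sided inverse morphism. -/
structure Iso {LV LE : Type} (G H : RGraph LV LE) : Type where
  toMor : Morphism G H
  invMor : Morphism H G
  leftV : ∀ v, invMor.fV (toMor.fV v) = v
  leftE : ∀ e, invMor.fE (toMor.fE e) = e
  rightV : ∀ v, toMor.fV (invMor.fV v) = v
  rightE : ∀ e, toMor.fE (invMor.fE e) = e

/-- A rule `⟨L ← K → R⟩`: graphs `L`, `K`, `R` together with inclusion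
(injective) morphisms `K ↪ L` and `K ↪ R`.  (In the rooted relabelling setting
`L` and `R` are additionally required to be TLRGs; this requirement is stated
as a hypothesis where needed.) -/
structure Rule (LV LE : Type) : Type 1 where
  L : RGraph LV LE
  K : RGraph LV LE
  R : RGraph LV LE
  incL : Morphism K L
  incR : Morphism K R
  injL : incL.Injective
  injR : incR.Injective

namespace Rule

variable {LV LE : Type} (r : Rule LV LE) (G : RGraph LV LE)

/-- The inverse rule `r⁻¹ = ⟨R ← K → L⟩`. -/
def inv (r : Rule LV LE) : Rule LV LE where
  L := r.R
  K := r.K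
  R := r.L
  incL := r.incR
  incR := r.incL
  injL := r.injR
  injR := r.injL

/-- The dangling condition: no edge of `G ∖ g(L)` is incident to a node of `g(L ∖ K)`. -/
def Dangling (g : Morphism r.L G) : Prop :=
  ∀ e : G.E, (∀ e' : r.L.E, g.fE e' ≠ e) →
    ∀ v : r.L.V, (∀ k : r.K.V, r.incL.fV k ≠ v) →
      G.s e ≠ g.fV v ∧ G.t e ≠ g.fV v

/-- The match `g` is applicable: it is injective and satisfies the dangling condition. -/
def Applicable (g : Morphism r.L G) : Prop := g.Injective ∧ r.Dangling G g

/-- the nodes `g(L ∖ K)` deleted by applying `r` via `g` -/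
def DelV (g : Morphism r.L G) : Set G.V :=
  {x | ∃ v : r.L.V, (∀ k : r.K.V, r.incL.fV k ≠ v) ∧ g.fV v = x}

/-- the edges `g(L ∖ K)` deleted by applying `r` via `g` -/
def DelE (g : Morphism r.L G) : Set G.E :=
  {x | ∃ e : r.L.E, (∀ k : r.K.E, r.incL.fE k ≠ e) ∧ g.fE e = x}

theorem kept_incL {g : Morphism r.L G} (hinj : g.Injective) (k : r.K.V) :
    g.fV (r.incL.fV k) ∉ r.DelV G g := by
  rintro ⟨v, hv, heq⟩
  exact hv k (hinj.1 heq).symm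

theorem kept_src {g : Morphism r.L G} (h : r.Applicable G g) {e : G.E}
    (he : e ∉ r.DelE G g) : G.s e ∉ r.DelV G g := by
  rintro ⟨v, hv, heq⟩
  by_cases hc : ∃ e', g.fE e' = e
  · obtain ⟨e', rfl⟩ := hc
    by_cases hk : ∃ k, r.incL.fE k = e'
    · obtain ⟨k, rfl⟩ := hk
      have h1 : g.fV (r.L.s (r.incL.fE k)) = G.s (g.fE (r.incL.fE k)) := g.src _
      have h2 : r.incL.fV (r.K.s k) = r.L.s (r.incL.fE k) := r.incL.src k
      have h3 : g.fV v = g.fV (r.incL.fV (r.K.s k)) := by rw [heq, h2, h1]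
      exact hv _ (h.1.1 h3).symm
    · exact he ⟨e', fun k hk' => hk ⟨k, hk'⟩, rfl⟩
  · exact (h.2 e (fun e' he' => hc ⟨e', he'⟩) v hv).1 heq.symm

theorem kept_tgt {g : Morphism r.L G} (h : r.Applicable G g) {e : G.E}
    (he : e ∉ r.DelE G g) : G.t e ∉ r.DelV G g := by
  rintro ⟨v, hv, heq⟩
  by_cases hc : ∃ e', g.fE e' = e
  · obtain ⟨e', rfl⟩ := hc
    by_cases hk : ∃ k, r.incL.fE k = e'
    · obtain ⟨k, rfl⟩ := hk
      have h1 : g.fV (r.L.t (r.incL.fE k)) = G.t (g.fE (r.incL.fE k)) := g.tgt _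
      have h2 : r.incL.fV (r.K.t k) = r.L.t (r.incL.fE k) := r.incL.tgt k
      have h3 : g.fV v = g.fV (r.incL.fV (r.K.t k)) := by rw [heq, h2, h1]
      exact hv _ (h.1.1 h3).symm
    · exact he ⟨e', fun k hk' => hk ⟨k, hk'⟩, rfl⟩
  · exact (h.2 e (fun e' he' => hc ⟨e', he'⟩) v hv).2 heq.symm

attribute [local instance] Classical.propDecidable

/-- The result graph of applying `r` to `G` via an applicable match `g`:
delete `g(L ∖ K)` (undefining labels/rootedness of images of interface nodes
where they are undefined in `K`), then add `R ∖ K` disjointly, relabelling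
(and re-rooting) the images of interface nodes according to `R`. -/
noncomputable def result (g : Morphism r.L G) (h : r.Applicable G g) : RGraph LV LE where
  V := {x : G.V // x ∉ r.DelV G g} ⊕ {v : r.R.V // ∀ k, r.incR.fV k ≠ v}
  E := {x : G.E // x ∉ r.DelE G g} ⊕ {e : r.R.E // ∀ k, r.incR.fE k ≠ e}
  finV := by
    haveI := G.finV; haveI := r.R.finV
    infer_instance
  finE := by
    haveI := G.finE; haveI := r.R.finE
    infer_instance
  s := fun e =>
    match e with
    | Sum.inl x => Sum.inl ⟨G.s x.1, r.kept_src G h x.2⟩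
    | Sum.inr x =>
        if hk : ∃ k, r.incR.fV k = r.R.s x.1 then
          Sum.inl ⟨g.fV (r.incL.fV hk.choose), r.kept_incL G h.1 _⟩
        else Sum.inr ⟨r.R.s x.1, fun k hk' => hk ⟨k, hk'⟩⟩
  t := fun e =>
    match e with
    | Sum.inl x => Sum.inl ⟨G.t x.1, r.kept_tgt G h x.2⟩
    | Sum.inr x =>
        if hk : ∃ k, r.incR.fV k = r.R.t x.1 then
          Sum.inl ⟨g.fV (r.incL.fV hk.choose), r.kept_incL G h.1 _⟩
        else Sum.inr ⟨r.R.t x.1, fun k hk' => hk ⟨k, hk'⟩⟩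
  l := fun v =>
    match v with
    | Sum.inl x =>
        if hk : ∃ k : r.K.V, r.K.l k = none ∧ g.fV (r.incL.fV k) = x.1 then
          r.R.l (r.incR.fV hk.choose)
        else G.l x.1
    | Sum.inr v => r.R.l v.1
  m := fun e =>
    match e with
    | Sum.inl x => G.m x.1
    | Sum.inr x => r.R.m x.1
  p := fun v =>
    match v with
    | Sum.inl x =>
        if hk : ∃ k : r.K.V, r.K.p k = none ∧ g.fV (r.incL.fV k) = x.1 then
          r.R.p (r.incR.fV hk.choose)
        else G.p x.1
    | Sum.inr v => r.R.p v.1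

/-- Direct derivation `G ⇒_r M`: there is an applicable match `g` such that `M`
is isomorphic to the result of applying `r` to `G` via `g`. -/
def Deriv (r : Rule LV LE) (G M : RGraph LV LE) : Prop :=
  ∃ (g : Morphism r.L G) (h : r.Applicable G g), Nonempty (Iso (r.result G g h) M)

end Rule

/-- `G ⇒_𝓡 H` for a set of rules. -/
def GTStep {LV LE : Type} (Rs : Set (Rule LV LE)) (G H : RGraph LV LE) : Prop :=
  ∃ r ∈ Rs, r.Deriv G H

/-- `G ⇒*_𝓡 H`: the reflexive-transitive closure of `⇒_𝓡`, up to isomorphism. -/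
def GTDerivStar {LV LE : Type} (Rs : Set (Rule LV LE)) (G H : RGraph LV LE) : Prop :=
  Relation.ReflTransGen (GTStep Rs) G H ∨ Nonempty (Iso G H)
/-! ## The tree-recognition system -/

/-- node labels: `□` (square) and `△` (triangle) -/
inductive NodeLab : Type where
  | square : NodeLab
  | tri : NodeLab
deriving DecidableEq

/-- `L` of rule `r0`: `v1 --□--> v2`, both `□`-labelled, `v1` unrooted, `v2` rooted. -/
abbrev L0 : RGraph NodeLab Unit where
  V := Fin 2
  E := Unit
  finV := inferInstance
  finE := inferInstance
  s := fun _ => 0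
  t := fun _ => 1
  l := fun _ => some .square
  m := fun _ => ()
  p := ![some false, some true]

/-- `K` of rules `r0` and `r1`: the single node `v1`, unlabelled, rootedness undefined. -/
abbrev K0 : RGraph NodeLab Unit where
  V := Unit
  E := PEmpty
  finV := inferInstance
  finE := inferInstance
  s := PEmpty.elim
  t := PEmpty.elim
  l := fun _ => none
  m := PEmpty.elim
  p := fun _ => none

/-- `R` of rules `r0` and `r1`: the single node `v1`, labelled `□`, rooted. -/
abbrev R0 : RGraph NodeLab Unit where
  V := Unit
  E := PEmpty
  finV := inferInstance
  finE := inferInstance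
  s := PEmpty.elim
  t := PEmpty.elim
  l := fun _ => some .square
  m := PEmpty.elim
  p := fun _ => some true

def incL0 : Morphism K0 L0 where
  fV := fun _ => 0
  fE := PEmpty.elim
  src := fun e => e.elim
  tgt := fun e => e.elim
  edgeLabel := fun e => e.elim
  nodeLabel := fun _ _ h => nomatch h
  rootedness := fun _ _ h => nomatch h

def incR0 : Morphism K0 R0 where
  fV := id
  fE := PEmpty.elim
  src := fun e => e.elim
  tgt := fun e => e.elim
  edgeLabel := fun e => e.elim
  nodeLabel := fun _ _ h => nomatch h
  rootedness := fun _ _ h => nomatch h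

/-- rule `r0`: prune a rooted `□`-leaf with unrooted `□`-parent, root moves to the parent -/
def r0 : Rule NodeLab Unit where
  L := L0
  K := K0
  R := R0
  incL := incL0
  incR := incR0
  injL := ⟨Function.injective_of_subsingleton _, Function.injective_of_subsingleton _⟩
  injR := ⟨Function.injective_of_subsingleton _, Function.injective_of_subsingleton _⟩

/-- `L` of rule `r1`: like `L0` but `v1` is labelled `△`. -/
abbrev L1 : RGraph NodeLab Unit where
  V := Fin 2
  E := Unit
  finV := inferInstance
  finE := inferInstance
  s := fun _ => 0
  t := fun _ => 1
  l := ![some .tri, some .square]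
  m := fun _ => ()
  p := ![some false, some true]

def incL1 : Morphism K0 L1 where
  fV := fun _ => 0
  fE := PEmpty.elim
  src := fun e => e.elim
  tgt := fun e => e.elim
  edgeLabel := fun e => e.elim
  nodeLabel := fun _ _ h => nomatch h
  rootedness := fun _ _ h => nomatch h

/-- rule `r1`: prune a rooted `□`-leaf with unrooted `△`-parent, root moves to the
parent which becomes `□`-labelled -/
def r1 : Rule NodeLab Unit where
  L := L1
  K := K0
  R := R0
  incL := incL1
  incR := incR0
  injL := ⟨Function.injective_of_subsingleton _, Function.injective_of_subsingleton _⟩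
  injR := ⟨Function.injective_of_subsingleton _, Function.injective_of_subsingleton _⟩

/-- `L` of rule `r2`: `v1 --□--> v2`, both `□`-labelled, `v1` rooted, `v2` unrooted. -/
abbrev L2 : RGraph NodeLab Unit where
  V := Fin 2
  E := Unit
  finV := inferInstance
  finE := inferInstance
  s := fun _ => 0
  t := fun _ => 1
  l := fun _ => some .square
  m := fun _ => ()
  p := ![some true, some false]

/-- `K` of rule `r2`: nodes `v1, v2`, unlabelled, rootedness undefined, no edges. -/
abbrev K2 : RGraph NodeLab Unit where
  V := Fin 2
  E := PEmpty
  finV := inferInstance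
  finE := inferInstance
  s := PEmpty.elim
  t := PEmpty.elim
  l := fun _ => none
  m := PEmpty.elim
  p := fun _ => none

/-- `R` of rule `r2`: `v1 --□--> v2`, `v1` labelled `△` and unrooted, `v2` labelled `□`
and rooted. -/
abbrev R2 : RGraph NodeLab Unit where
  V := Fin 2
  E := Unit
  finV := inferInstance
  finE := inferInstance
  s := fun _ => 0
  t := fun _ => 1
  l := ![some .tri, some .square]
  m := fun _ => ()
  p := ![some false, some true]

def incL2 : Morphism K2 L2 where
  fV := id
  fE := PEmpty.elim
  src := fun e => e.elim
  tgt := fun e => e.elim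
  edgeLabel := fun e => e.elim
  nodeLabel := fun _ _ h => nomatch h
  rootedness := fun _ _ h => nomatch h

def incR2 : Morphism K2 R2 where
  fV := id
  fE := PEmpty.elim
  src := fun e => e.elim
  tgt := fun e => e.elim
  edgeLabel := fun e => e.elim
  nodeLabel := fun _ _ h => nomatch h
  rootedness := fun _ _ h => nomatch h

/-- rule `r2`: push the root one step down an edge, marking the old position `△` -/
def r2 : Rule NodeLab Unit where
  L := L2
  K := K2
  R := R2
  incL := incL2
  incR := incR2
  injL := ⟨Function.injective_id, Function.injective_of_subsingleton _⟩
  injR := ⟨Function.injective_id, Function.injective_of_subsingleton _⟩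

/-- the rule set of the tree-recognition system -/
def TreeRules : Set (Rule NodeLab Unit) := {r0, r1, r2}

/-! ## Trees -/

/-- `IsUndirWalk G v l w`: `l` is an undirected walk from `v` to `w` in `G`;
each step is an edge together with a boolean telling in which direction it is
traversed. -/
def IsUndirWalk {LV LE : Type} (G : RGraph LV LE) : G.V → List (G.E × Bool) → G.V → Prop
  | v, [], w => v = w
  | v, (e, true) :: rest, w => G.s e = v ∧ IsUndirWalk G (G.t e) rest w
  | v, (e, false) :: rest, w => G.t e = v ∧ IsUndirWalk G (G.s e) rest w

/-- connectedness via undirected walks -/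
def IsConnectedGraph {LV LE : Type} (G : RGraph LV LE) : Prop :=
  ∀ v w : G.V, ∃ l, IsUndirWalk G v l w

/-- an undirected cycle: a non-empty closed undirected walk without repeated edges -/
def HasUndirCycle {LV LE : Type} (G : RGraph LV LE) : Prop :=
  ∃ (v : G.V) (l : List (G.E × Bool)), l ≠ [] ∧ IsUndirWalk G v l v ∧ (l.map Prod.fst).Nodup

/-- a tree: non-empty, connected, no undirected cycles, and every node has at
most one incoming edge -/
def IsTree {LV LE : Type} (G : RGraph LV LE) : Prop :=
  Nonempty G.V ∧ IsConnectedGraph G ∧ ¬ HasUndirCycle G ∧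
    ∀ v : G.V, Nat.card {e : G.E // G.t e = v} ≤ 1

/-- an input graph: a TLRG with exactly one root node, all nodes labelled `□`
(all edges are `□`-labelled since `Unit` is the edge alphabet) -/
def IsInputGraph (G : RGraph NodeLab Unit) : Prop :=
  G.IsTLRG ∧ (∀ v, G.l v = some .square) ∧ G.rootCount = 1

/-- no rule of `Rs` is applicable to `H` -/
def InNormalForm {LV LE : Type} (Rs : Set (Rule LV LE)) (H : RGraph LV LE) : Prop :=
  ¬ ∃ r ∈ Rs, ∃ g : Morphism r.L H, r.Applicable H g


namespace TreePres
open RGraph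

variable {LV LE : Type}

lemma walk_map {G H : RGraph LV LE} (fV : G.V → H.V) (fE : G.E → H.E)
    (hs : ∀ e, fV (G.s e) = H.s (fE e)) (ht : ∀ e, fV (G.t e) = H.t (fE e)) :
    ∀ (l : List (G.E × Bool)) (v w : G.V), IsUndirWalk G v l w →
      IsUndirWalk H (fV v) (l.map fun p => (fE p.1, p.2)) (fV w) := by
  intro l
  induction l with
  | nil => intro v w h; exact congrArg fV h
  | cons p rest ih =>
    obtain ⟨e, b⟩ := p
    cases b <;> intro v w h
    · exact ⟨by rw [← h.1, ht], by rw [← hs]; exact ih _ _ h.2⟩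
    · exact ⟨by rw [← h.1, hs], by rw [← ht]; exact ih _ _ h.2⟩

lemma walk_append {G : RGraph LV LE} :
    ∀ (l₁ l₂ : List (G.E × Bool)) (v w : G.V),
      IsUndirWalk G v (l₁ ++ l₂) w ↔ ∃ m, IsUndirWalk G v l₁ m ∧ IsUndirWalk G m l₂ w := by
  intro l₁
  induction l₁ with
  | nil =>
    intro l₂ v w
    constructor
    · intro h; exact ⟨v, rfl, h⟩
    · rintro ⟨m, rfl, h⟩; exact h
  | cons p rest ih =>
    intro l₂ v w
    obtain ⟨e, b⟩ := p
    cases b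
    · constructor
      · rintro ⟨h1, h2⟩
        obtain ⟨m, hm1, hm2⟩ := (ih _ _ _).1 h2
        exact ⟨m, ⟨h1, hm1⟩, hm2⟩
      · rintro ⟨m, ⟨h1, h2⟩, h3⟩
        exact ⟨h1, (ih _ _ _).2 ⟨m, h2, h3⟩⟩
    · constructor
      · rintro ⟨h1, h2⟩
        obtain ⟨m, hm1, hm2⟩ := (ih _ _ _).1 h2
        exact ⟨m, ⟨h1, hm1⟩, hm2⟩
      · rintro ⟨m, ⟨h1, h2⟩, h3⟩
        exact ⟨h1, (ih _ _ _).2 ⟨m, h2, h3⟩⟩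

/-- trees are invariant under structural isomorphism (one direction) -/
lemma isTree_of_congr {G H : RGraph LV LE} (eV : G.V ≃ H.V) (eE : G.E ≃ H.E)
    (hs : ∀ e, eV (G.s e) = H.s (eE e)) (ht : ∀ e, eV (G.t e) = H.t (eE e))
    (hG : IsTree G) : IsTree H := by
  obtain ⟨hne, hconn, hcyc, hdeg⟩ := hG
  have hs' : ∀ e, eV.symm (H.s e) = G.s (eE.symm e) := by
    intro e
    apply eV.injective
    rw [Equiv.apply_symm_apply, hs, Equiv.apply_symm_apply]
  have ht' : ∀ e, eV.symm (H.t e) = G.t (eE.symm e) := by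
    intro e
    apply eV.injective
    rw [Equiv.apply_symm_apply, ht, Equiv.apply_symm_apply]
  refine ⟨⟨eV hne.some⟩, ?_, ?_, ?_⟩
  · intro v w
    obtain ⟨l, hl⟩ := hconn (eV.symm v) (eV.symm w)
    have := walk_map eV eE hs ht l _ _ hl
    simp only [Equiv.apply_symm_apply] at this
    exact ⟨_, this⟩
  · rintro ⟨v, l, hne', hw, hnd⟩
    refine hcyc ⟨eV.symm v, l.map fun p => (eE.symm p.1, p.2), ?_, ?_, ?_⟩
    · simp [hne']
    · exact walk_map eV.symm eE.symm hs' ht' l _ _ hw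
    · have : (l.map fun p => (eE.symm p.1, p.2)).map Prod.fst
          = (l.map Prod.fst).map eE.symm := by simp [Function.comp]
      rw [this]
      exact hnd.map (eE.symm.injective)
  · intro v
    haveI := G.finE
    refine le_trans (Nat.card_le_card_of_injective
      (fun z => (⟨eE.symm z.1, ?_⟩ : {e : G.E // G.t e = eV.symm v})) ?_) (hdeg _)
    · rw [← ht', z.2]
    · intro a b hab
      have : eE.symm a.1 = eE.symm b.1 := congrArg Subtype.val hab
      exact Subtype.ext (eE.symm.injective this)

lemma isTree_congr {G H : RGraph LV LE} (eV : G.V ≃ H.V) (eE : G.E ≃ H.E)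
    (hs : ∀ e, eV (G.s e) = H.s (eE e)) (ht : ∀ e, eV (G.t e) = H.t (eE e)) :
    IsTree G ↔ IsTree H := by
  constructor
  · exact isTree_of_congr eV eE hs ht
  · refine isTree_of_congr eV.symm eE.symm ?_ ?_ <;> intro e <;> apply eV.injective <;>
      rw [Equiv.apply_symm_apply]
    · rw [hs, Equiv.apply_symm_apply]
    · rw [ht, Equiv.apply_symm_apply]

end TreePres

namespace TreePres
open RGraph

variable {LV LE : Type}

/-- Deleting a leaf `x` (with unique incident edge `e` pointing into it)
preserves tree-ness in both directions. -/
lemma isTree_leaf {G H : RGraph LV LE} (x : G.V) (e : G.E)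
    (hse : G.s e ≠ x) (hte : G.t e = x)
    (hinc : ∀ e', G.s e' = x ∨ G.t e' = x → e' = e)
    (eV : H.V ≃ {v : G.V // v ≠ x})
    (eE : H.E ≃ {e' : G.E // e' ≠ e})
    (hs : ∀ e', ((eV (H.s e')) : G.V) = G.s (eE e'))
    (ht : ∀ e', ((eV (H.t e')) : G.V) = G.t (eE e')) :
    IsTree G ↔ IsTree H := by
  have hincS : ∀ e', G.s e' = x → e' = e := fun e' h => hinc e' (Or.inl h)
  have hincT : ∀ e', G.t e' = x → e' = e := fun e' h => hinc e' (Or.inr h)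
  -- a step starting at x must be (e, false) and continue at G.s e
  have stepFromX : ∀ (e₁ : G.E) (b : Bool) (rest : List (G.E × Bool)) (w : G.V),
      IsUndirWalk G x ((e₁, b) :: rest) w →
      e₁ = e ∧ b = false ∧ IsUndirWalk G (G.s e) rest w := by
    intro e₁ b rest w hw
    cases b
    · obtain ⟨h1, h2⟩ := hw
      obtain rfl := hincT e₁ h1
      exact ⟨rfl, rfl, h2⟩
    · obtain ⟨h1, h2⟩ := hw
      obtain rfl := hincS e₁ h1
      exact absurd h1 hse
  -- a walk into x avoiding e is trivial
  have noEdgeToX : ∀ (l : List (G.E × Bool)) (v : G.V),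
      IsUndirWalk G v l x → (∀ p ∈ l, p.1 ≠ e) → l = [] ∧ v = x := by
    intro l
    induction l with
    | nil => intro v hv _; exact ⟨rfl, hv⟩
    | cons p rest ih =>
      intro v hv hne
      obtain ⟨e₁, b⟩ := p
      exfalso
      cases b
      · obtain ⟨h1, h2⟩ := hv
        obtain ⟨-, h3⟩ := ih _ h2 (fun q hq => hne q (List.mem_cons_of_mem _ hq))
        exact hne (e₁, false) (List.mem_cons_self) (hincS e₁ h3)
      · obtain ⟨h1, h2⟩ := hv
        obtain ⟨-, h3⟩ := ih _ h2 (fun q hq => hne q (List.mem_cons_of_mem _ hq))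
        exact hne (e₁, true) (List.mem_cons_self) (hincT e₁ h3)
  -- a walk from x avoiding e is trivial
  have noEdgeFromX : ∀ (l : List (G.E × Bool)) (w : G.V),
      IsUndirWalk G x l w → (∀ p ∈ l, p.1 ≠ e) → l = [] ∧ w = x := by
    intro l w hw hne
    cases l with
    | nil => exact ⟨rfl, hw.symm⟩
    | cons p rest =>
      obtain ⟨e₁, b⟩ := p
      obtain ⟨h1, -, -⟩ := stepFromX e₁ b rest w hw
      exact absurd h1 (hne (e₁, b) (List.mem_cons_self))
  -- helper equalities for lifting
  have key_s : ∀ (e₁ : G.E) (h1 : e₁ ≠ e) (hsx : G.s e₁ ≠ x),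
      H.s (eE.symm ⟨e₁, h1⟩) = eV.symm ⟨G.s e₁, hsx⟩ := by
    intro e₁ h1 hsx
    apply eV.injective
    apply Subtype.ext
    rw [hs, Equiv.apply_symm_apply, Equiv.apply_symm_apply]
  have key_t : ∀ (e₁ : G.E) (h1 : e₁ ≠ e) (htx : G.t e₁ ≠ x),
      H.t (eE.symm ⟨e₁, h1⟩) = eV.symm ⟨G.t e₁, htx⟩ := by
    intro e₁ h1 htx
    apply eV.injective
    apply Subtype.ext
    rw [ht, Equiv.apply_symm_apply, Equiv.apply_symm_apply]
  -- lift an e-avoiding walk in G to H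
  have walkLift : ∀ (l : List (G.E × Bool)) (v w : G.V),
      IsUndirWalk G v l w → (∀ p ∈ l, p.1 ≠ e) → ∀ (hv : v ≠ x) (hw : w ≠ x),
      ∃ l', IsUndirWalk H (eV.symm ⟨v, hv⟩) l' (eV.symm ⟨w, hw⟩) ∧
        (l'.map fun p => (((eE p.1) : G.E), p.2)) = l := by
    intro l
    induction l with
    | nil =>
      intro v w hvw hne hv hw
      exact ⟨[], by subst hvw; rfl, rfl⟩
    | cons p rest ih =>
      intro v w hvw hne hv hw
      obtain ⟨e₁, b⟩ := p
      have h1 : e₁ ≠ e := hne (e₁, b) (List.mem_cons_self)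
      cases b
      · obtain ⟨hh1, hh2⟩ := hvw
        have hsx : G.s e₁ ≠ x := fun hc => h1 (hincS e₁ hc)
        obtain ⟨l', hl1, hl2⟩ := ih _ _ hh2 (fun q hq => hne q (List.mem_cons_of_mem _ hq)) hsx hw
        refine ⟨(eE.symm ⟨e₁, h1⟩, false) :: l', ⟨?_, ?_⟩, ?_⟩
        · rw [key_t e₁ h1 (fun hc => hv (hh1 ▸ hc))]
          congr 1
          exact Subtype.ext hh1
        · rw [key_s e₁ h1 hsx]; exact hl1
        · simp only [List.map_cons, hl2, Equiv.apply_symm_apply]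
      · obtain ⟨hh1, hh2⟩ := hvw
        have htx : G.t e₁ ≠ x := fun hc => h1 (hincT e₁ hc)
        obtain ⟨l', hl1, hl2⟩ := ih _ _ hh2 (fun q hq => hne q (List.mem_cons_of_mem _ hq)) htx hw
        refine ⟨(eE.symm ⟨e₁, h1⟩, true) :: l', ⟨?_, ?_⟩, ?_⟩
        · rw [key_s e₁ h1 (fun hc => hv (hh1 ▸ hc))]
          congr 1
          exact Subtype.ext hh1
        · rw [key_t e₁ h1 htx]; exact hl1
        · simp only [List.map_cons, hl2, Equiv.apply_symm_apply]
  -- remove uses of e from a walk between non-x endpoints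
  have removeE : ∀ (n : ℕ) (l : List (G.E × Bool)) (v w : G.V), l.length ≤ n →
      IsUndirWalk G v l w → v ≠ x → w ≠ x →
      ∃ l', IsUndirWalk G v l' w ∧ ∀ p ∈ l', p.1 ≠ e := by
    intro n
    induction n with
    | zero =>
      intro l v w hlen hw hv hw'
      rw [List.length_eq_zero_iff.1 (Nat.le_zero.1 hlen)] at hw
      exact ⟨[], hw, by simp⟩
    | succ n ih =>
      intro l v w hlen hw hv hw'
      cases l with
      | nil => exact ⟨[], hw, by simp⟩
      | cons p rest =>
        obtain ⟨e₁, b⟩ := p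
        by_cases h1 : e₁ = e
        · subst h1
          cases b
          · exact absurd (by rw [← hw.1]; exact hte) hv
          · obtain ⟨hh1, hh2⟩ := hw
            rw [hte] at hh2
            cases rest with
            | nil => exact absurd hh2.symm hw'
            | cons q rest2 =>
              obtain ⟨e₂, b₂⟩ := q
              obtain ⟨-, -, h3⟩ := stepFromX e₂ b₂ rest2 w hh2
              rw [hh1] at h3
              have hlen2 : rest2.length ≤ n := by
                simp only [List.length_cons] at hlen; omega
              exact ih rest2 v w hlen2 h3 hv hw'
        · have hlen1 : rest.length ≤ n := by
            simp only [List.length_cons] at hlen; omega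
          cases b
          · obtain ⟨hh1, hh2⟩ := hw
            have hmx : G.s e₁ ≠ x := fun hc => h1 (hincS e₁ hc)
            obtain ⟨l', hl1, hl2⟩ := ih rest (G.s e₁) w hlen1 hh2 hmx hw'
            refine ⟨(e₁, false) :: l', ⟨hh1, hl1⟩, ?_⟩
            intro p hp
            rcases List.mem_cons.1 hp with h | h
            · rw [h]; exact h1
            · exact hl2 p h
          · obtain ⟨hh1, hh2⟩ := hw
            have hmx : G.t e₁ ≠ x := fun hc => h1 (hincT e₁ hc)
            obtain ⟨l', hl1, hl2⟩ := ih rest (G.t e₁) w hlen1 hh2 hmx hw'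
            refine ⟨(e₁, true) :: l', ⟨hh1, hl1⟩, ?_⟩
            intro p hp
            rcases List.mem_cons.1 hp with h | h
            · rw [h]; exact h1
            · exact hl2 p h
  constructor
  · -- G tree → H tree
    rintro ⟨-, hconn, hcyc, hdeg⟩
    refine ⟨⟨eV.symm ⟨G.s e, hse⟩⟩, ?_, ?_, ?_⟩
    · intro v' w'
      obtain ⟨l, hl⟩ := hconn (eV v').1 (eV w').1
      obtain ⟨l₂, hl2, hl3⟩ := removeE l.length l _ _ le_rfl hl (eV v').2 (eV w').2
      obtain ⟨l', hl', -⟩ := walkLift l₂ _ _ hl2 hl3 (eV v').2 (eV w').2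
      refine ⟨l', ?_⟩
      have hv : eV.symm ⟨(eV v').1, (eV v').2⟩ = v' := by
        rw [show (⟨(eV v').1, (eV v').2⟩ : {v : G.V // v ≠ x}) = eV v' from rfl,
          Equiv.symm_apply_apply]
      have hw : eV.symm ⟨(eV w').1, (eV w').2⟩ = w' := by
        rw [show (⟨(eV w').1, (eV w').2⟩ : {v : G.V // v ≠ x}) = eV w' from rfl,
          Equiv.symm_apply_apply]
      rwa [hv, hw] at hl'
    · rintro ⟨v', l', hne', hw', hnd'⟩
      refine hcyc ⟨(eV v').1, l'.map fun p => (((eE p.1) : G.E), p.2), by simp [hne'], ?_, ?_⟩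
      · exact walk_map (fun z => ((eV z) : G.V)) (fun z => ((eE z) : G.E))
          (fun e' => hs e') (fun e' => ht e') l' _ _ hw'
      · have : ((l'.map fun p => (((eE p.1) : G.E), p.2)).map Prod.fst)
            = (l'.map Prod.fst).map (fun z => ((eE z) : G.E)) := by
          simp [Function.comp]
        rw [this]
        exact hnd'.map (Subtype.val_injective.comp eE.injective)
    · intro v'
      haveI := G.finE
      refine le_trans (Nat.card_le_card_of_injective
        (fun z => (⟨((eE z.1) : G.E), ?_⟩ : {e' : G.E // G.t e' = (eV v').1})) ?_) (hdeg _)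
      · rw [← ht, z.2]
      · intro a b hab
        simp only [Subtype.mk.injEq] at hab
        exact Subtype.ext (eE.injective (Subtype.ext hab))
  · -- H tree → G tree
    rintro ⟨hHne, hconn, hcyc, hdeg⟩
    have walkDown : ∀ (v' w' : H.V), ∃ l, IsUndirWalk G ((eV v') : G.V) l ((eV w') : G.V) := by
      intro v' w'
      obtain ⟨l', hl'⟩ := hconn v' w'
      exact ⟨_, walk_map (fun z => ((eV z) : G.V)) (fun z => ((eE z) : G.E))
        (fun e' => hs e') (fun e' => ht e') l' _ _ hl'⟩
    refine ⟨⟨x⟩, ?_, ?_, ?_⟩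
    · -- connectedness of G
      have toAny : ∀ (v : G.V) (hv : v ≠ x) (w : G.V), ∃ l, IsUndirWalk G v l w := by
        intro v hv w
        by_cases hwx : w = x
        · subst hwx
          obtain ⟨l, hl⟩ := walkDown (eV.symm ⟨v, hv⟩) (eV.symm ⟨G.s e, hse⟩)
          simp only [Equiv.apply_symm_apply] at hl
          exact ⟨l ++ [(e, true)], (walk_append _ _ _ _).2 ⟨G.s e, hl, rfl, hte⟩⟩
        · obtain ⟨l, hl⟩ := walkDown (eV.symm ⟨v, hv⟩) (eV.symm ⟨w, hwx⟩)
          simp only [Equiv.apply_symm_apply] at hl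
          exact ⟨l, hl⟩
      intro v w
      by_cases hvx : v = x
      · by_cases hwx : w = x
        · exact ⟨[], hvx.trans hwx.symm⟩
        · obtain ⟨l, hl⟩ := toAny (G.s e) hse w
          exact ⟨(e, false) :: l, by rw [hte, hvx], hl⟩
      · exact toAny v hvx w
    · -- no cycle in G
      rintro ⟨v, l, hlne, hw, hnd⟩
      by_cases he : e ∈ l.map Prod.fst
      · obtain ⟨p, hp, hpe⟩ := List.mem_map.1 he
        obtain ⟨l₁, l₂, rfl⟩ := List.append_of_mem hp
        obtain ⟨e₀, b⟩ := p
        have hpe' : e₀ = e := hpe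
        subst e₀
        have hnd' := hnd
        rw [List.map_append, List.map_cons] at hnd'
        have hne₁ : ∀ q ∈ l₁, q.1 ≠ e := by
          intro q hq hqe
          exact (List.disjoint_of_nodup_append hnd') (List.mem_map_of_mem hq)
            (by rw [hqe]; exact List.mem_cons_self)
        have hne₂ : ∀ q ∈ l₂, q.1 ≠ e := by
          intro q hq hqe
          have h2 := (List.nodup_append.1 hnd').2.1
          rw [List.nodup_cons] at h2
          exact h2.1 (List.mem_map.2 ⟨q, hq, hqe⟩)
        obtain ⟨m, hm1, hm2⟩ := (walk_append _ _ _ _).1 hw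
        cases b
        · -- step (e, false): m = x, continue at G.s e
          obtain ⟨hh1, hh2⟩ := hm2
          have hmx : m = x := by rw [← hh1]; exact hte
          subst hmx
          obtain ⟨rfl, rfl⟩ := noEdgeToX l₁ v hm1 hne₁
          obtain ⟨-, h⟩ := noEdgeToX l₂ (G.s e) hh2 hne₂
          exact hse h
        · -- step (e, true): m = G.s e, continue at x
          obtain ⟨hh1, hh2⟩ := hm2
          rw [hte] at hh2
          obtain ⟨rfl, rfl⟩ := noEdgeFromX l₂ v hh2 hne₂
          obtain ⟨-, hmx⟩ := noEdgeFromX l₁ m hm1 hne₁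
          exact hse (hh1.trans hmx)
      · have hnee : ∀ p ∈ l, p.1 ≠ e := by
          intro p hp hpe
          exact he (hpe ▸ List.mem_map_of_mem hp)
        have hvx : v ≠ x := by
          intro hvv
          rw [hvv] at hw
          cases l with
          | nil => exact hlne rfl
          | cons p rest =>
            obtain ⟨e₁, b⟩ := p
            obtain ⟨h1, -, -⟩ := stepFromX e₁ b rest x hw
            exact hnee (e₁, b) (List.mem_cons_self) h1
        obtain ⟨l', hl1, hl2⟩ := walkLift l v v hw hnee hvx hvx
        refine hcyc ⟨eV.symm ⟨v, hvx⟩, l', ?_, hl1, ?_⟩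
        · rintro rfl
          rw [← hl2] at hlne
          exact hlne rfl
        · have hmm : (l.map Prod.fst) = (l'.map Prod.fst).map (fun z => ((eE z) : G.E)) := by
            rw [← hl2]; simp [Function.comp]
          rw [hmm] at hnd
          exact hnd.of_map _
    · -- in-degree of G
      intro v
      by_cases hvx : v = x
      · rw [hvx]
        haveI : Subsingleton {e' : G.E // G.t e' = x} := by
          refine ⟨fun a b => Subtype.ext ?_⟩
          rw [hincT a.1 a.2, hincT b.1 b.2]
        rcases isEmpty_or_nonempty {e' : G.E // G.t e' = x} with hem | ⟨a⟩
        · exact (Nat.card_eq_zero.2 (Or.inl hem)) ▸ Nat.zero_le 1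
        · obtain ⟨a⟩ := a
          exact le_of_eq (Nat.card_of_subsingleton a)
      · haveI := H.finE
        refine le_trans (Nat.card_le_card_of_injective
          (fun z => (⟨eE.symm ⟨z.1, fun hc => hvx (by rw [← z.2, hc, hte])⟩, ?_⟩ :
            {e'' : H.E // H.t e'' = eV.symm ⟨v, hvx⟩})) ?_) (hdeg _)
        · rw [key_t _ _ (fun hc => hvx (z.2 ▸ hc))]
          congr 1
          exact Subtype.ext z.2
        · intro a b hab
          simp only [Subtype.mk.injEq] at hab
          have h3 := eE.symm.injective hab
          simp only [Subtype.mk.injEq] at h3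
          exact Subtype.ext h3

end TreePres

namespace TreePres
open RGraph

attribute [local instance] Classical.propDecidable

variable {LV LE : Type}

lemma isTree_iso {G H : RGraph LV LE} (i : Iso G H) : IsTree G ↔ IsTree H :=
  isTree_congr ⟨i.toMor.fV, i.invMor.fV, i.leftV, i.rightV⟩
    ⟨i.toMor.fE, i.invMor.fE, i.leftE, i.rightE⟩ i.toMor.src i.toMor.tgt

lemma fin2cases : ∀ v : Fin 2, v = 0 ∨ v = 1 := by decide

lemma r0_pres (G : RGraph NodeLab Unit) (g : Morphism r0.L G) (h : r0.Applicable G g) :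
    IsTree G ↔ IsTree (r0.result G g h) := by
  haveI hV : IsEmpty {v : r0.R.V // ∀ k : r0.K.V, r0.incR.fV k ≠ v} :=
    ⟨fun z => z.2 z.1 rfl⟩
  haveI hE : IsEmpty {e : r0.R.E // ∀ k : r0.K.E, r0.incR.fE k ≠ e} :=
    ⟨fun z => PEmpty.elim z.1⟩
  have hDelV : ∀ y, y ∈ r0.DelV G g ↔ y = g.fV (1 : Fin 2) := by
    intro y
    constructor
    · rintro ⟨v, hv, rfl⟩
      rcases fin2cases v with rfl | rfl
      · exact absurd rfl (hv ())
      · rfl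
    · rintro rfl
      exact ⟨(1 : Fin 2), fun _ => by show (0 : Fin 2) ≠ 1; decide, rfl⟩
  have hDelE : ∀ y, y ∈ r0.DelE G g ↔ y = g.fE () := by
    intro y
    constructor
    · rintro ⟨e', he', rfl⟩
      rfl
    · rintro rfl
      exact ⟨(), fun k => PEmpty.elim k, rfl⟩
  refine isTree_leaf (g.fV (1 : Fin 2)) (g.fE ()) ?_ ((g.tgt ()).symm) ?_
    ((Equiv.sumEmpty _ _).trans (Equiv.subtypeEquivRight fun y => not_congr (hDelV y)))
    ((Equiv.sumEmpty _ _).trans (Equiv.subtypeEquivRight fun y => not_congr (hDelE y)))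
    ?_ ?_
  · intro hc
    rw [← g.src ()] at hc
    exact (by decide : (0 : Fin 2) ≠ 1) (h.1.1 hc)
  · intro e' hor
    by_contra hne
    have hd := h.2 e' (fun e'' hc => hne hc.symm) (1 : Fin 2)
      (fun _ => by show (0 : Fin 2) ≠ 1; decide)
    rcases hor with hh | hh
    · exact hd.1 hh
    · exact hd.2 hh
  · rintro (z | z)
    · rfl
    · exact PEmpty.elim z.1
  · rintro (z | z)
    · rfl
    · exact PEmpty.elim z.1

lemma r1_pres (G : RGraph NodeLab Unit) (g : Morphism r1.L G) (h : r1.Applicable G g) :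
    IsTree G ↔ IsTree (r1.result G g h) := by
  haveI hV : IsEmpty {v : r1.R.V // ∀ k : r1.K.V, r1.incR.fV k ≠ v} :=
    ⟨fun z => z.2 z.1 rfl⟩
  haveI hE : IsEmpty {e : r1.R.E // ∀ k : r1.K.E, r1.incR.fE k ≠ e} :=
    ⟨fun z => PEmpty.elim z.1⟩
  have hDelV : ∀ y, y ∈ r1.DelV G g ↔ y = g.fV (1 : Fin 2) := by
    intro y
    constructor
    · rintro ⟨v, hv, rfl⟩
      rcases fin2cases v with rfl | rfl
      · exact absurd rfl (hv ())
      · rfl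
    · rintro rfl
      exact ⟨(1 : Fin 2), fun _ => by show (0 : Fin 2) ≠ 1; decide, rfl⟩
  have hDelE : ∀ y, y ∈ r1.DelE G g ↔ y = g.fE () := by
    intro y
    constructor
    · rintro ⟨e', he', rfl⟩
      rfl
    · rintro rfl
      exact ⟨(), fun k => PEmpty.elim k, rfl⟩
  refine isTree_leaf (g.fV (1 : Fin 2)) (g.fE ()) ?_ ((g.tgt ()).symm) ?_
    ((Equiv.sumEmpty _ _).trans (Equiv.subtypeEquivRight fun y => not_congr (hDelV y)))
    ((Equiv.sumEmpty _ _).trans (Equiv.subtypeEquivRight fun y => not_congr (hDelE y)))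
    ?_ ?_
  · intro hc
    rw [← g.src ()] at hc
    exact (by decide : (0 : Fin 2) ≠ 1) (h.1.1 hc)
  · intro e' hor
    by_contra hne
    have hd := h.2 e' (fun e'' hc => hne hc.symm) (1 : Fin 2)
      (fun _ => by show (0 : Fin 2) ≠ 1; decide)
    rcases hor with hh | hh
    · exact hd.1 hh
    · exact hd.2 hh
  · rintro (z | z)
    · rfl
    · exact PEmpty.elim z.1
  · rintro (z | z)
    · rfl
    · exact PEmpty.elim z.1

lemma r2_pres (G : RGraph NodeLab Unit) (g : Morphism r2.L G) (h : r2.Applicable G g) :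
    IsTree G ↔ IsTree (r2.result G g h) := by
  have hgE : g.fE () ∈ r2.DelE G g := ⟨(), fun k => PEmpty.elim k, rfl⟩
  refine (isTree_congr (G := r2.result G g h) (H := G)
    { toFun := fun z => match z with
        | .inl w => w.1
        | .inr w => absurd rfl (w.2 w.1)
      invFun := fun v => .inl ⟨v, fun hc => Exists.elim hc fun v' h' => h'.1 v' rfl⟩
      left_inv := by
        rintro (w | w)
        · rfl
        · exact absurd rfl (w.2 w.1)
      right_inv := fun v => rfl }
    { toFun := fun z => match z with
        | .inl w => w.1
        | .inr _ => g.fE ()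
      invFun := fun e' =>
        if hq : e' = g.fE () then .inr ⟨(), fun k => PEmpty.elim k⟩
        else .inl ⟨e', fun hc => hq (Exists.elim hc fun e'' h' => h'.2.symm)⟩
      left_inv := by
        rintro (w | w)
        · dsimp only
          exact dif_neg (fun hc : (w : G.E) = g.fE () => w.2 (hc.symm ▸ hgE))
        · dsimp only
          exact (dif_pos rfl).trans (congrArg Sum.inr (Subtype.ext rfl))
      right_inv := by
        intro e'
        by_cases hq : e' = g.fE ()
        · dsimp only
          simp [hq]
        · dsimp only
          simp [hq] }
    ?_ ?_).symm
  · rintro (z | z)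
    · rfl
    · have hk : ∃ k : r2.K.V, r2.incR.fV k = r2.R.s z.1 := ⟨(0 : Fin 2), rfl⟩
      simp only [Rule.result]
      rw [dif_pos hk]
      show g.fV (r2.incL.fV hk.choose) = G.s (g.fE ())
      rw [← g.src ()]
      exact congrArg g.fV hk.choose_spec
  · rintro (z | z)
    · rfl
    · have hk : ∃ k : r2.K.V, r2.incR.fV k = r2.R.t z.1 := ⟨(1 : Fin 2), rfl⟩
      simp only [Rule.result]
      rw [dif_pos hk]
      show g.fV (r2.incL.fV hk.choose) = G.t (g.fE ())
      rw [← g.tgt ()]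
      exact congrArg g.fV hk.choose_spec

lemma step_pres {G M : RGraph NodeLab Unit} (h : GTStep TreeRules G M) :
    IsTree G ↔ IsTree M := by
  obtain ⟨r, hr, g, ha, ⟨iso⟩⟩ := h
  have hmem : r = r0 ∨ r = r1 ∨ r = r2 := hr
  rcases hmem with rfl | rfl | rfl
  · exact (r0_pres G g ha).trans (isTree_iso iso)
  · exact (r1_pres G g ha).trans (isTree_iso iso)
  · exact (r2_pres G g ha).trans (isTree_iso iso)

end TreePres
/-- **Tree Preservation**: if `G` is an input graph and `G ⇒*_𝓡 H`, then `G` is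
a tree iff `H` is a tree. -/
theorem tree_preservation (G H : RGraph NodeLab Unit)
    (hG : IsInputGraph G) (hd : GTDerivStar TreeRules G H) :
    IsTree G ↔ IsTree H := by
  rcases hd with hstep | hiso
  · induction hstep with
    | refl => exact Iff.rfl
    | tail _ h2 ih => exact ih.trans (TreePres.step_pres h2)
  · obtain ⟨iso⟩ := hiso
    exact TreePres.isTree_iso iso
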